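/- Let $\alpha_t : \mathbb{R}^d \to PD_d(\mathbb{R})$ be any map into symmetric positive definite matrices, $\alpha_{st} = (\alpha_s + \alpha_t)/2$, and $\sigma > 0$. Then the kernel $K_\sigma(s,t) = \det(\alpha_{st}^{-1/2})\, \exp\bigl(-|\alpha_{st}^{-1/2}(s-t)|^2/(2\sigma^2)\bigr)$ is a positive semidefinite kernel on $\mathbb{R}^d$, i.e. for any points $x_1, \ldots, x_m \in \mathbb{R}^d$ and reals $a_1, \ldots, a_m$, $\sum_{i,j} a_i a_j K_\sigma(x_i, x_j) \geq 0$. -/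

import Mathlib

open Matrix Real MeasureTheory

namespace NSGK

variable {d : ℕ}

lemma flip (P : Matrix (Fin d) (Fin d) ℝ) (x y : Fin d → ℝ) :
    (P *ᵥ x) ⬝ᵥ y = x ⬝ᵥ Pᵀ *ᵥ y := by
  rw [dotProduct_comm, dotProduct_mulVec, ← mulVec_transpose, dotProduct_comm]

lemma bil_transpose (M : Matrix (Fin d) (Fin d) ℝ) (x y : Fin d → ℝ) :
    x ⬝ᵥ M *ᵥ y = y ⬝ᵥ Mᵀ *ᵥ x := by
  rw [dotProduct_mulVec, ← mulVec_transpose, dotProduct_comm]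

lemma bil_symm (M : Matrix (Fin d) (Fin d) ℝ) (hM : Mᵀ = M) (x y : Fin d → ℝ) :
    x ⬝ᵥ M *ᵥ y = y ⬝ᵥ M *ᵥ x := by
  rw [bil_transpose, hM]

lemma posdef_symm {M : Matrix (Fin d) (Fin d) ℝ} (hM : M.PosDef) : Mᵀ = M :=
  hM.isHermitian

lemma posdef_smul {M : Matrix (Fin d) (Fin d) ℝ} (hM : M.PosDef) {c : ℝ} (hc : 0 < c) :
    (c • M).PosDef := by
  refine posDef_iff_dotProduct_mulVec.mpr ⟨?_, ?_⟩
  · show (c • M)ᴴ = c • M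
    rw [conjTranspose_smul, hM.isHermitian]
    simp
  · intro x hx
    have := hM.dotProduct_mulVec_pos hx
    rw [smul_mulVec, dotProduct_smul]
    simpa using mul_pos hc (by simpa using this)

lemma prod_form (v : Fin d → ℝ) : exp (-(v ⬝ᵥ v)) = ∏ i, exp (-(1:ℝ) * (v i)^2) := by
  rw [← Real.exp_sum]
  congr 1
  simp [dotProduct, ← Finset.sum_neg_distrib, sq]

lemma gauss_base : ∫ v : Fin d → ℝ, exp (-(v ⬝ᵥ v)) = Real.sqrt π ^ d := by
  simp_rw [prod_form]
  rw [volume_pi]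
  rw [integral_fintype_prod_eq_pow (ι := Fin d) (fun x : ℝ => exp (-(1:ℝ) * x^2)),
    integral_gaussian]
  simp

lemma integrable_base : Integrable (fun v : Fin d → ℝ => exp (-(v ⬝ᵥ v))) := by
  simp_rw [prod_form]
  exact Integrable.fintype_prod (fun i => integrable_exp_neg_mul_sq one_pos)

lemma cov (S : Matrix (Fin d) (Fin d) ℝ) (hS : S.det ≠ 0) (f : (Fin d → ℝ) → ℝ) :
    (∫ v, f (S *ᵥ v)) = |S.det|⁻¹ * ∫ u, f u ∧
    (Integrable (fun v => f (S *ᵥ v)) ↔ Integrable f) := by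
  have hinv : Invertible S := S.invertibleOfIsUnitDet (Ne.isUnit hS)
  let e : (Fin d → ℝ) ≃ₗ[ℝ] (Fin d → ℝ) := S.toLinearEquiv' hinv
  have me : MeasurableEmbedding (e : (Fin d → ℝ) → (Fin d → ℝ)) :=
    e.toContinuousLinearEquiv.toHomeomorph.measurableEmbedding
  have hee : (e : (Fin d → ℝ) → (Fin d → ℝ)) = fun v => S *ᵥ v := by
    funext v; rfl
  have hmap : Measure.map (e : (Fin d → ℝ) → (Fin d → ℝ)) volume
      = ENNReal.ofReal |S.det|⁻¹ • volume := by
    rw [hee, ← abs_inv]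
    have := Real.map_matrix_volume_pi_eq_smul_volume_pi hS
    rw [← this]
    congr 1
  constructor
  · have h1 : (∫ v, f (S *ᵥ v)) = ∫ y, f y ∂(Measure.map (⇑e) volume) := by
      rw [me.integral_map]
      simp [hee]
    rw [h1, hmap, integral_smul_measure, ENNReal.toReal_ofReal (by positivity)]
    rfl
  · have h2 : Integrable (fun v => f (S *ᵥ v)) ↔ Integrable f (Measure.map (⇑e) volume) := by
      rw [me.integrable_map_iff]
      simp [hee, Function.comp_def]
    rw [h2, hmap, integrable_smul_measure (by simp [hS]) (by simp)]

lemma gauss_quad (C S : Matrix (Fin d) (Fin d) ℝ) (hC : C.PosDef) (hS : S.PosDef)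
    (hS2 : S * S = C⁻¹) (w : Fin d → ℝ) :
    (∫ u : Fin d → ℝ, exp (-((u - w) ⬝ᵥ C *ᵥ (u - w))) = Real.sqrt π ^ d * S.det)
    ∧ Integrable (fun u : Fin d → ℝ => exp (-((u - w) ⬝ᵥ C *ᵥ (u - w)))) := by
  have hSdet : S.det ≠ 0 := hS.det_pos.ne'
  have hCu : IsUnit C.det := hC.det_pos.ne'.isUnit
  have hSu : IsUnit S.det := hS.det_pos.ne'.isUnit
  have hCS : S * (C * S) = 1 := by
    have hC' : C = (S * S)⁻¹ := by rw [hS2, Matrix.nonsing_inv_nonsing_inv _ hCu]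
    have h3 : (S⁻¹ * S⁻¹) * S = S⁻¹ := by
      rw [Matrix.mul_assoc, Matrix.nonsing_inv_mul _ hSu, Matrix.mul_one]
    rw [hC', Matrix.mul_inv_rev, h3, Matrix.mul_nonsing_inv _ hSu]
  -- quadratic form diagonalization
  have hquad : ∀ v : Fin d → ℝ, (S *ᵥ v) ⬝ᵥ C *ᵥ (S *ᵥ v) = v ⬝ᵥ v := by
    intro v
    rw [flip, posdef_symm hS, mulVec_mulVec, mulVec_mulVec, Matrix.mul_assoc, hCS, one_mulVec]
  have base := @gauss_base d
  have covr := cov S hSdet (fun u => exp (-(u ⬝ᵥ C *ᵥ u)))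
  have hcomp : (fun v : Fin d → ℝ => exp (-((S *ᵥ v) ⬝ᵥ C *ᵥ (S *ᵥ v))))
      = fun v : Fin d → ℝ => exp (-(v ⬝ᵥ v)) := by
    funext v; rw [hquad]
  have core_int : Integrable (fun u : Fin d → ℝ => exp (-(u ⬝ᵥ C *ᵥ u))) := by
    rw [← covr.2]
    rw [show (fun v : Fin d → ℝ => (fun u => exp (-(u ⬝ᵥ C *ᵥ u))) (S *ᵥ v))
        = fun v : Fin d → ℝ => exp (-((S *ᵥ v) ⬝ᵥ C *ᵥ (S *ᵥ v))) from rfl, hcomp]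
    exact integrable_base
  have core : (∫ u : Fin d → ℝ, exp (-(u ⬝ᵥ C *ᵥ u))) = Real.sqrt π ^ d * S.det := by
    have := covr.1
    rw [show (fun v : Fin d → ℝ => (fun u => exp (-(u ⬝ᵥ C *ᵥ u))) (S *ᵥ v))
        = fun v : Fin d → ℝ => exp (-((S *ᵥ v) ⬝ᵥ C *ᵥ (S *ᵥ v))) from rfl] at this
    rw [hcomp, base] at this
    have habs : |S.det| = S.det := abs_of_pos hS.det_pos
    field_simp [habs] at this ⊢
    rw [habs] at this
    linarith [this]
  constructor
  · rw [show (fun u : Fin d → ℝ => exp (-((u - w) ⬝ᵥ C *ᵥ (u - w))))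
        = fun u => (fun z : Fin d → ℝ => exp (-(z ⬝ᵥ C *ᵥ z))) (u - w) from rfl]
    rw [integral_sub_right_eq_self (fun z : Fin d → ℝ => exp (-(z ⬝ᵥ C *ᵥ z))) w]
    exact core
  · exact (core_int.comp_sub_right w)

lemma acb_eq {A B : Matrix (Fin d) (Fin d) ℝ} (hA : A.PosDef) (hB : B.PosDef) :
    A * ((A + B)⁻¹ * B) = B * ((A + B)⁻¹ * A) := by
  have hAu : IsUnit A.det := hA.det_pos.ne'.isUnit
  have hBu : IsUnit B.det := hB.det_pos.ne'.isUnit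
  have e1 : A * ((A + B)⁻¹ * B) = (B⁻¹ * ((A + B) * A⁻¹))⁻¹ := by
    rw [Matrix.mul_inv_rev, Matrix.mul_inv_rev, Matrix.nonsing_inv_nonsing_inv _ hAu,
      Matrix.nonsing_inv_nonsing_inv _ hBu, Matrix.mul_assoc]
  have e2 : B * ((A + B)⁻¹ * A) = (A⁻¹ * ((A + B) * B⁻¹))⁻¹ := by
    rw [Matrix.mul_inv_rev, Matrix.mul_inv_rev, Matrix.nonsing_inv_nonsing_inv _ hAu,
      Matrix.nonsing_inv_nonsing_inv _ hBu, Matrix.mul_assoc]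
  have e3 : B⁻¹ * ((A + B) * A⁻¹) = B⁻¹ + A⁻¹ := by
    rw [Matrix.add_mul, Matrix.mul_nonsing_inv _ hAu, Matrix.mul_add, Matrix.mul_one,
      ← Matrix.mul_assoc, Matrix.nonsing_inv_mul _ hBu, Matrix.one_mul]
  have e4 : A⁻¹ * ((A + B) * B⁻¹) = B⁻¹ + A⁻¹ := by
    rw [Matrix.add_mul, Matrix.mul_nonsing_inv _ hBu, Matrix.mul_add, Matrix.mul_one,
      ← Matrix.mul_assoc, Matrix.nonsing_inv_mul _ hAu, Matrix.one_mul, add_comm]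
  rw [e1, e2, e3, e4]

lemma complete_sq {A B : Matrix (Fin d) (Fin d) ℝ} (hA : A.PosDef) (hB : B.PosDef)
    (s t u : Fin d → ℝ) :
    (u - s) ⬝ᵥ A *ᵥ (u - s) + (u - t) ⬝ᵥ B *ᵥ (u - t)
      = (u - (A + B)⁻¹ *ᵥ (A *ᵥ s + B *ᵥ t)) ⬝ᵥ (A + B) *ᵥ
          (u - (A + B)⁻¹ *ᵥ (A *ᵥ s + B *ᵥ t))
        + (s - t) ⬝ᵥ (A * (A + B)⁻¹ * B) *ᵥ (s - t) := by
  have hAS : Aᵀ = A := posdef_symm hA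
  have hBS : Bᵀ = B := posdef_symm hB
  have hC : (A + B).PosDef := hA.add hB
  have hCu : IsUnit (A + B).det := hC.det_pos.ne'.isUnit
  set C := A + B with hCdef
  set N := C⁻¹ with hNdef
  have hCS : Cᵀ = C := posdef_symm hC
  have hNS : Nᵀ = N := by rw [hNdef, Matrix.transpose_nonsing_inv, hCS]
  set w := N *ᵥ (A *ᵥ s + B *ᵥ t) with hwdef
  have hw : C *ᵥ w = A *ᵥ s + B *ᵥ t := by
    rw [hwdef, mulVec_mulVec, Matrix.mul_nonsing_inv _ hCu, one_mulVec]
  have hNC : N * C = 1 := Matrix.nonsing_inv_mul _ hCu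
  have hACB : A * (N * B) = B * (N * A) := acb_eq hA hB
  have key1 : A * (N * A) + A * (N * B) = A := by
    rw [← Matrix.mul_add, ← Matrix.mul_add, ← Matrix.mul_assoc, ← hCdef, Matrix.mul_assoc,
      hNC, Matrix.mul_one]
  have key2 : B * (N * B) + B * (N * A) = B := by
    rw [← Matrix.mul_add, ← Matrix.mul_add, add_comm (B : Matrix (Fin d) (Fin d) ℝ) A,
      ← Matrix.mul_assoc, ← hCdef, Matrix.mul_assoc, hNC, Matrix.mul_one]
  have expand : ∀ (P : Matrix (Fin d) (Fin d) ℝ) (x y : Fin d → ℝ),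
      (x - y) ⬝ᵥ P *ᵥ (x - y)
        = x ⬝ᵥ P *ᵥ x - x ⬝ᵥ P *ᵥ y - y ⬝ᵥ P *ᵥ x + y ⬝ᵥ P *ᵥ y := by
    intro P x y
    simp only [mulVec_sub, sub_dotProduct, dotProduct_sub]
    ring
  rw [expand A u s, expand B u t, expand C u w, expand (A * N * B) s t]
  simp only [Matrix.mul_assoc]
  have h1 : u ⬝ᵥ C *ᵥ u = u ⬝ᵥ A *ᵥ u + u ⬝ᵥ B *ᵥ u := by
    rw [hCdef, add_mulVec, dotProduct_add]
  have h2 : u ⬝ᵥ C *ᵥ w = u ⬝ᵥ A *ᵥ s + u ⬝ᵥ B *ᵥ t := by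
    rw [hw, dotProduct_add]
  have h3 : w ⬝ᵥ C *ᵥ u = u ⬝ᵥ A *ᵥ s + u ⬝ᵥ B *ᵥ t := by
    rw [bil_symm C hCS, h2]
  have h4 : w ⬝ᵥ C *ᵥ w = s ⬝ᵥ (A * (N * A)) *ᵥ s + t ⬝ᵥ (B * (N * A)) *ᵥ s
      + s ⬝ᵥ (A * (N * B)) *ᵥ t + t ⬝ᵥ (B * (N * B)) *ᵥ t := by
    rw [hw, dotProduct_add, hwdef, flip, flip, hNS, add_dotProduct, add_dotProduct,
      flip A, flip B, flip A, flip B, hAS, hBS]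
    simp only [mulVec_mulVec, Matrix.mul_assoc]
    ring
  have sym1 : s ⬝ᵥ A *ᵥ u = u ⬝ᵥ A *ᵥ s := bil_symm A hAS s u
  have sym2 : t ⬝ᵥ B *ᵥ u = u ⬝ᵥ B *ᵥ t := bil_symm B hBS t u
  have htrans : (B * (N * A))ᵀ = A * (N * B) := by
    simp only [Matrix.transpose_mul, hAS, hBS, hNS, Matrix.mul_assoc]
  have hsym3 : t ⬝ᵥ (B * (N * A)) *ᵥ s = s ⬝ᵥ (A * (N * B)) *ᵥ t := by
    rw [bil_transpose, htrans]
  have hsym4 : t ⬝ᵥ (A * (N * B)) *ᵥ s = s ⬝ᵥ (A * (N * B)) *ᵥ t := by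
    rw [hACB, bil_transpose, htrans, hACB]
  have k1 : s ⬝ᵥ (A * (N * A)) *ᵥ s + s ⬝ᵥ (A * (N * B)) *ᵥ s = s ⬝ᵥ A *ᵥ s := by
    rw [← dotProduct_add, ← add_mulVec, key1]
  have k2 : t ⬝ᵥ (B * (N * B)) *ᵥ t + t ⬝ᵥ (A * (N * B)) *ᵥ t = t ⬝ᵥ B *ᵥ t := by
    rw [hACB, ← dotProduct_add, ← add_mulVec, key2]
  linarith [h1, h2, h3, h4, sym1, sym2, hsym3, hsym4, k1, k2]

lemma gauss_conv (A B S : Matrix (Fin d) (Fin d) ℝ) (hA : A.PosDef) (hB : B.PosDef)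
    (hS : S.PosDef) (hS2 : S * S = (A + B)⁻¹) (s t : Fin d → ℝ) :
    ((∫ u : Fin d → ℝ, exp (-((u - s) ⬝ᵥ A *ᵥ (u - s))) * exp (-((u - t) ⬝ᵥ B *ᵥ (u - t))))
      = Real.sqrt π ^ d * S.det * exp (-((s - t) ⬝ᵥ (A * (A + B)⁻¹ * B) *ᵥ (s - t))))
    ∧ Integrable (fun u : Fin d → ℝ =>
        exp (-((u - s) ⬝ᵥ A *ᵥ (u - s))) * exp (-((u - t) ⬝ᵥ B *ᵥ (u - t)))) := by
  have hC : (A + B).PosDef := hA.add hB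
  set w := (A + B)⁻¹ *ᵥ (A *ᵥ s + B *ᵥ t) with hwdef
  have hpt : (fun u : Fin d → ℝ =>
      exp (-((u - s) ⬝ᵥ A *ᵥ (u - s))) * exp (-((u - t) ⬝ᵥ B *ᵥ (u - t))))
      = fun u : Fin d → ℝ => exp (-((u - w) ⬝ᵥ (A + B) *ᵥ (u - w)))
          * exp (-((s - t) ⬝ᵥ (A * (A + B)⁻¹ * B) *ᵥ (s - t))) := by
    funext u
    rw [← Real.exp_add, ← Real.exp_add, ← neg_add, ← neg_add, complete_sq hA hB s t u]
  have hq := gauss_quad (A + B) S hC hS hS2 w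
  constructor
  · rw [hpt, integral_mul_const, hq.1]
  · rw [hpt]
    exact hq.2.mul_const _

lemma pos_eq_of_sq {a b : ℝ} (ha : 0 ≤ a) (hb : 0 ≤ b) (h : a ^ 2 = b ^ 2) : a = b := by
  nlinarith

lemma smul_inv' (k : ℝ) (hk : k ≠ 0) (M : Matrix (Fin d) (Fin d) ℝ) (hM : IsUnit M.det) :
    (k • M)⁻¹ = k⁻¹ • M⁻¹ := by
  apply Matrix.inv_eq_left_inv
  rw [Matrix.smul_mul, Matrix.mul_smul, smul_smul, inv_mul_cancel₀ hk,
    Matrix.nonsing_inv_mul _ hM, one_smul]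

lemma isq_det_sq (isq : Matrix (Fin d) (Fin d) ℝ → Matrix (Fin d) (Fin d) ℝ)
    (hisq : ∀ M : Matrix (Fin d) (Fin d) ℝ, M.PosDef →
      (isq M).PosDef ∧ isq M * isq M = M⁻¹)
    (M : Matrix (Fin d) (Fin d) ℝ) (hM : M.PosDef) :
    (isq M).det ^ 2 = M.det⁻¹ := by
  have h := congrArg Matrix.det (hisq M hM).2
  rw [Matrix.det_mul, ← sq] at h
  rw [h, Matrix.det_nonsing_inv, Ring.inverse_eq_inv']

lemma claim (σ : ℝ) (hσ : 0 < σ)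
    (isq : Matrix (Fin d) (Fin d) ℝ → Matrix (Fin d) (Fin d) ℝ)
    (hisq : ∀ M : Matrix (Fin d) (Fin d) ℝ, M.PosDef →
      (isq M).PosDef ∧ isq M * isq M = M⁻¹)
    (Pi Pj : Matrix (Fin d) (Fin d) ℝ) (hPi : Pi.PosDef) (hPj : Pj.PosDef)
    (s t : Fin d → ℝ) :
    (∫ u : Fin d → ℝ,
        ((isq Pi).det * exp (-((u - s) ⬝ᵥ ((σ ^ 2)⁻¹ • Pi⁻¹) *ᵥ (u - s)))) *
        ((isq Pj).det * exp (-((u - t) ⬝ᵥ ((σ ^ 2)⁻¹ • Pj⁻¹) *ᵥ (u - t)))))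
      = (σ * Real.sqrt (π / 2)) ^ d *
        ((isq ((1 / 2 : ℝ) • (Pi + Pj))).det *
          exp (-(∑ k, ((isq ((1 / 2 : ℝ) • (Pi + Pj))) *ᵥ (s - t)) k ^ 2) / (2 * σ ^ 2))) := by
  have hc : (0:ℝ) < (σ ^ 2)⁻¹ := by positivity
  set c : ℝ := (σ ^ 2)⁻¹ with hcdef
  set A : Matrix (Fin d) (Fin d) ℝ := c • Pi⁻¹ with hAdef
  set B : Matrix (Fin d) (Fin d) ℝ := c • Pj⁻¹ with hBdef
  have hA : A.PosDef := posdef_smul hPi.inv hc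
  have hB : B.PosDef := posdef_smul hPj.inv hc
  set st : Matrix (Fin d) (Fin d) ℝ := (1 / 2 : ℝ) • (Pi + Pj) with hstdef
  have hst : st.PosDef := posdef_smul (hPi.add hPj) (by norm_num)
  obtain ⟨hSst, hSst2⟩ := hisq st hst
  obtain ⟨hSij, hSij2⟩ := hisq (A + B) (hA.add hB)
  have hPiu : IsUnit Pi.det := hPi.det_pos.ne'.isUnit
  have hPju : IsUnit Pj.det := hPj.det_pos.ne'.isUnit
  have hPPu : IsUnit (Pi + Pj).det := (hPi.add hPj).det_pos.ne'.isUnit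
  have hQ : (Pi⁻¹ + Pj⁻¹).PosDef := hPi.inv.add hPj.inv
  have hQu : IsUnit (Pi⁻¹ + Pj⁻¹).det := hQ.det_pos.ne'.isUnit
  -- matrix identity for the exponent
  have hQP : Pj⁻¹ * (Pi + Pj) = (Pi⁻¹ + Pj⁻¹) * Pi := by
    rw [Matrix.mul_add, Matrix.nonsing_inv_mul _ hPju, Matrix.add_mul,
      Matrix.nonsing_inv_mul _ hPiu, add_comm]
  have hinner : (Pi + Pj)⁻¹ = Pi⁻¹ * ((Pi⁻¹ + Pj⁻¹)⁻¹ * Pj⁻¹) := by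
    apply Matrix.inv_eq_left_inv
    simp only [← Matrix.mul_assoc]
    rw [Matrix.mul_assoc _ Pj⁻¹ (Pi + Pj), hQP, Matrix.mul_assoc Pi⁻¹,
      ← Matrix.mul_assoc _ _ Pi, Matrix.nonsing_inv_mul _ hQu, Matrix.one_mul,
      Matrix.nonsing_inv_mul _ hPiu]
  have hAB : A + B = c • (Pi⁻¹ + Pj⁻¹) := by rw [hAdef, hBdef, smul_add]
  have hMij : A * (A + B)⁻¹ * B = c • (Pi + Pj)⁻¹ := by
    rw [hAB, smul_inv' c hc.ne' _ hQu, hAdef, hBdef]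
    simp only [Matrix.smul_mul, Matrix.mul_smul, smul_smul]
    rw [hinner]
    simp only [smul_smul, Matrix.mul_assoc]
    congr 1
    field_simp
  have hstinv : st⁻¹ = (2:ℝ) • (Pi + Pj)⁻¹ := by
    rw [hstdef, smul_inv' (1/2) (by norm_num) _ hPPu]
    norm_num
  set v : Fin d → ℝ := s - t with hvdef
  -- exponent equality
  have hexp : exp (-(v ⬝ᵥ (A * (A + B)⁻¹ * B) *ᵥ v))
      = exp (-(∑ k, ((isq st) *ᵥ v) k ^ 2) / (2 * σ ^ 2)) := by
    congr 1
    have h1 : v ⬝ᵥ (A * (A + B)⁻¹ * B) *ᵥ v = c * (v ⬝ᵥ (Pi + Pj)⁻¹ *ᵥ v) := by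
      rw [hMij, smul_mulVec, dotProduct_smul, smul_eq_mul]
    have h2 : (∑ k, ((isq st) *ᵥ v) k ^ 2) = 2 * (v ⬝ᵥ (Pi + Pj)⁻¹ *ᵥ v) := by
      have e0 : (∑ k, ((isq st) *ᵥ v) k ^ 2) = ((isq st) *ᵥ v) ⬝ᵥ ((isq st) *ᵥ v) := by
        simp [dotProduct, sq]
      rw [e0, flip, posdef_symm hSst, mulVec_mulVec, hSst2, hstinv, smul_mulVec,
        dotProduct_smul, smul_eq_mul]
    rw [h1, h2, hcdef]
    field_simp
  -- determinant equality
  have dpos1 : 0 < (isq Pi).det := (hisq Pi hPi).1.det_pos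
  have dpos2 : 0 < (isq Pj).det := (hisq Pj hPj).1.det_pos
  have dpos3 : 0 < (isq (A + B)).det := hSij.det_pos
  have dpos4 : 0 < (isq st).det := hSst.det_pos
  have p1 : 0 < Pi.det := hPi.det_pos
  have p2 : 0 < Pj.det := hPj.det_pos
  have pr : 0 < (Pi + Pj).det := (hPi.add hPj).det_pos
  have pq : 0 < (Pi⁻¹ + Pj⁻¹).det := hQ.det_pos
  have hdQ : Pj.det⁻¹ * (Pi + Pj).det = (Pi⁻¹ + Pj⁻¹).det * Pi.det := by
    have := congrArg Matrix.det hQP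
    simpa [Matrix.det_mul, Matrix.det_nonsing_inv, Ring.inverse_eq_inv'] using this
  have b1 : (isq Pi).det ^ 2 = Pi.det⁻¹ := isq_det_sq isq hisq Pi hPi
  have b2 : (isq Pj).det ^ 2 = Pj.det⁻¹ := isq_det_sq isq hisq Pj hPj
  have b3 : (isq (A + B)).det ^ 2 = (A + B).det⁻¹ := isq_det_sq isq hisq _ (hA.add hB)
  have b5 : (isq st).det ^ 2 = st.det⁻¹ := isq_det_sq isq hisq st hst
  have b4 : (A + B).det = c ^ d * (Pi⁻¹ + Pj⁻¹).det := by
    rw [hAB, Matrix.det_smul, Fintype.card_fin]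
  have b6 : st.det = (1 / 2 : ℝ) ^ d * (Pi + Pj).det := by
    rw [hstdef, Matrix.det_smul, Fintype.card_fin]
  have hdets : (isq Pi).det * (isq Pj).det * (Real.sqrt π ^ d * (isq (A + B)).det)
      = (σ * Real.sqrt (π / 2)) ^ d * (isq st).det := by
    apply pos_eq_of_sq
    · positivity
    · positivity
    · have e1 : ((isq Pi).det * (isq Pj).det * (Real.sqrt π ^ d * (isq (A + B)).det)) ^ 2
          = (isq Pi).det ^ 2 * (isq Pj).det ^ 2 *
            ((Real.sqrt π ^ 2) ^ d * (isq (A + B)).det ^ 2) := by ring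
      have e2 : ((σ * Real.sqrt (π / 2)) ^ d * (isq st).det) ^ 2
          = ((σ * Real.sqrt (π / 2)) ^ 2) ^ d * (isq st).det ^ 2 := by ring
      rw [e1, e2, b1, b2, b3, b5, b4, b6, sq_sqrt pi_pos.le,
        show (σ * Real.sqrt (π / 2)) ^ 2 = σ ^ 2 * (π / 2) by
          rw [mul_pow, sq_sqrt (by positivity)]]
      have hq' : (Pi⁻¹ + Pj⁻¹).det = Pj.det⁻¹ * (Pi + Pj).det * Pi.det⁻¹ := by
        field_simp [p1.ne'] at hdQ ⊢
        linarith [hdQ]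
      rw [hq', hcdef]
      field_simp
      rw [← mul_pow, ← mul_pow]
      congr 1
      field_simp
  -- assemble the integral
  have hconv := (gauss_conv A B (isq (A + B)) hA hB hSij hSij2 s t).1
  calc (∫ u : Fin d → ℝ,
        ((isq Pi).det * exp (-((u - s) ⬝ᵥ A *ᵥ (u - s)))) *
        ((isq Pj).det * exp (-((u - t) ⬝ᵥ B *ᵥ (u - t)))))
      = ∫ u : Fin d → ℝ, ((isq Pi).det * (isq Pj).det) *
          (exp (-((u - s) ⬝ᵥ A *ᵥ (u - s))) * exp (-((u - t) ⬝ᵥ B *ᵥ (u - t)))) := by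
        congr 1; funext u; ring
    _ = ((isq Pi).det * (isq Pj).det) *
          ∫ u : Fin d → ℝ, exp (-((u - s) ⬝ᵥ A *ᵥ (u - s))) *
            exp (-((u - t) ⬝ᵥ B *ᵥ (u - t))) := integral_const_mul _ _
    _ = ((isq Pi).det * (isq Pj).det * (Real.sqrt π ^ d * (isq (A + B)).det)) *
          exp (-(v ⬝ᵥ (A * (A + B)⁻¹ * B) *ᵥ v)) := by rw [hconv]; ring
    _ = ((σ * Real.sqrt (π / 2)) ^ d * (isq st).det) *
          exp (-(∑ k, ((isq st) *ᵥ v) k ^ 2) / (2 * σ ^ 2)) := by rw [hdets, hexp]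
    _ = (σ * Real.sqrt (π / 2)) ^ d *
          ((isq st).det * exp (-(∑ k, ((isq st) *ᵥ v) k ^ 2) / (2 * σ ^ 2))) := by ring

end NSGK

open NSGK Matrix Real

/-- The nonstationary Gaussian kernel
`K_σ(s,t) = det(α_{st}^{-1/2}) exp(-|α_{st}^{-1/2}(s-t)|²/(2σ²))`, where
`α_{st} = (α_s + α_t)/2` and `α^{-1/2}` denotes the inverse positive definite square
root, is a positive semidefinite kernel on `ℝᵈ`. -/
theorem nonstationary_gaussian_kernel_posSemidef (d : ℕ)
    (α : (Fin d → ℝ) → Matrix (Fin d) (Fin d) ℝ)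
    (hα : ∀ x, (α x).PosDef)
    (isq : Matrix (Fin d) (Fin d) ℝ → Matrix (Fin d) (Fin d) ℝ)
    (hisq : ∀ M : Matrix (Fin d) (Fin d) ℝ, M.PosDef →
      (isq M).PosDef ∧ isq M * isq M = M⁻¹)
    (σ : ℝ) (hσ : 0 < σ)
    (K : (Fin d → ℝ) → (Fin d → ℝ) → ℝ)
    (hK : ∀ s t, K s t = (isq ((1 / 2 : ℝ) • (α s + α t))).det *
      Real.exp (-(∑ i, ((isq ((1 / 2 : ℝ) • (α s + α t))).mulVec (s - t) i) ^ 2) /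
        (2 * σ ^ 2))) :
    ∀ (m : ℕ) (x : Fin m → (Fin d → ℝ)) (a : Fin m → ℝ),
      0 ≤ ∑ i, ∑ j, a i * a j * K (x i) (x j) := by
  intro m x a
  set c : ℝ := (σ ^ 2)⁻¹ with hcdef
  have hc : 0 < c := by positivity
  set A : Fin m → Matrix (Fin d) (Fin d) ℝ := fun i => c • (α (x i))⁻¹ with hAdef
  have hA : ∀ i, (A i).PosDef := fun i => posdef_smul (hα (x i)).inv hc
  set F : Fin m → (Fin d → ℝ) → ℝ := fun i u =>
    (isq (α (x i))).det * exp (-((u - x i) ⬝ᵥ (A i) *ᵥ (u - x i))) with hFdef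
  set c₀ : ℝ := (σ * Real.sqrt (π / 2)) ^ d with hc₀def
  have hc₀ : 0 < c₀ := by
    apply pow_pos (mul_pos hσ (Real.sqrt_pos.2 (by positivity)))
  -- the key pointwise claim
  have claimK : ∀ i j, (∫ u, F i u * F j u) = c₀ * K (x i) (x j) := by
    intro i j
    rw [hK]
    have h := claim σ hσ isq hisq (α (x i)) (α (x j)) (hα _) (hα _) (x i) (x j)
    simp only [hFdef, hAdef, hcdef, hc₀def]
    exact h
  have claimInt : ∀ i j, Integrable (fun u => F i u * F j u) := by
    intro i j
    have h := (gauss_conv (A i) (A j) (isq (A i + A j)) (hA i) (hA j)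
      (hisq _ ((hA i).add (hA j))).1 (hisq _ ((hA i).add (hA j))).2 (x i) (x j)).2
    have : (fun u => F i u * F j u) = fun u =>
        ((isq (α (x i))).det * (isq (α (x j))).det) *
          (exp (-((u - x i) ⬝ᵥ (A i) *ᵥ (u - x i))) *
            exp (-((u - x j) ⬝ᵥ (A j) *ᵥ (u - x j)))) := by
      funext u; simp only [hFdef]; ring
    rw [this]
    exact h.const_mul _
  -- assemble
  have step1 : (0:ℝ) ≤ ∫ u : Fin d → ℝ, (∑ i, a i * F i u) ^ 2 :=
    integral_nonneg fun u => sq_nonneg _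
  have step2 : (∫ u : Fin d → ℝ, (∑ i, a i * F i u) ^ 2)
      = ∑ i, ∑ j, a i * a j * ∫ u, F i u * F j u := by
    have e1 : (fun u : Fin d → ℝ => (∑ i, a i * F i u) ^ 2)
        = fun u => ∑ i, ∑ j, a i * a j * (F i u * F j u) := by
      funext u
      rw [sq, Finset.sum_mul_sum]
      exact Finset.sum_congr rfl fun i _ => Finset.sum_congr rfl fun j _ => by ring
    rw [e1, integral_finset_sum _ (fun i _ =>
      integrable_finset_sum _ (fun j _ => ((claimInt i j).const_mul _)))]
    refine Finset.sum_congr rfl fun i _ => ?_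
    rw [integral_finset_sum _ (fun j _ => ((claimInt i j).const_mul _))]
    exact Finset.sum_congr rfl fun j _ => integral_const_mul _ _
  have step3 : ∑ i, ∑ j, a i * a j * ∫ u, F i u * F j u
      = c₀ * ∑ i, ∑ j, a i * a j * K (x i) (x j) := by
    rw [Finset.mul_sum]
    refine Finset.sum_congr rfl fun i _ => ?_
    rw [Finset.mul_sum]
    refine Finset.sum_congr rfl fun j _ => ?_
    rw [claimK i j]; ring
  have : (0:ℝ) ≤ c₀ * ∑ i, ∑ j, a i * a j * K (x i) (x j) := by
    rw [← step3, ← step2]; exact step1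
  nlinarith [this, hc₀]
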